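/- Let t ≥ 1 and n > t be integers, set m = t²+t+1 and d = 2t+n. Define χ : ℕ³ → (ZMod m) × (ZMod n) by χ(p,q,r) = (p − t·q mod m, p + q + r mod n). Then χ is a d-polychromatic simple Q_2-coloring with m·n colors (χ is surjective and d-polychromatic). -/

import Mathlib

/-- A simple `Q_ℓ`-coloring `χ : ℕ^{ℓ+1} → C` is `d`-polychromatic if for every
embedded `Q_d`, encoded by region counts `a_0, …, a_d` (given by `a : ℕ → ℕ`; only
the first `d+1` values are used), and every color `c`, some `Q_ℓ`-subface receives
color `c`.  A subface is given by selected star positions `0 < s 1 < ⋯ < s ℓ < d+1`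
(with conventions `s 0 = 0`, `s (ℓ+1) = d+1`) and bits `ε k ∈ {0,1}` for the
unselected stars; its tuple is `p j = ∑_{s j ≤ i < s (j+1)} a i + ∑_{s j < k < s (j+1)} ε k`. -/
def PolyColoring (ℓ d : ℕ) {C : Type*} (χ : (Fin (ℓ + 1) → ℕ) → C) : Prop :=
  ∀ a : ℕ → ℕ, ∀ c : C, ∃ s : ℕ → ℕ, ∃ ε : ℕ → ℕ,
    s 0 = 0 ∧ s (ℓ + 1) = d + 1 ∧ (∀ j, j ≤ ℓ → s j < s (j + 1)) ∧ (∀ k, ε k ≤ 1) ∧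
    χ (fun j => (∑ i ∈ Finset.Ico (s j.1) (s (j.1 + 1)), a i) +
                (∑ k ∈ Finset.Ioo (s j.1) (s (j.1 + 1)), ε k)) = c

open Finset


lemma natCast_val_self {M : ℕ} [NeZero M] (v : ZMod M) : ((v.val : ℕ) : ZMod M) = v :=
  ZMod.natCast_rightInverse v

lemma cast_ne_shift {n : ℕ} [NeZero n] (a δ : ℕ) (h0 : 0 < δ) (hδ : δ < n) :
    ((a : ZMod n)) ≠ ((a + δ : ℕ) : ZMod n) := by
  intro h
  have h2 : ((δ : ℕ) : ZMod n) = 0 := by push_cast at h ⊢; linear_combination -h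
  have h3 : ((δ : ℕ) : ZMod n).val = δ := ZMod.val_cast_of_lt hδ
  rw [h2, ZMod.val_zero] at h3; omega

lemma exists_e3 {n : ℕ} [NeZero n] (σ : ℕ) (g : ZMod n) :
    ∃ e₃, e₃ < n ∧ ((σ + e₃ : ℕ) : ZMod n) = g := by
  refine ⟨(g - σ).val, ZMod.val_lt _, ?_⟩
  push_cast [natCast_val_self]
  ring

lemma exists_e3_pair {n : ℕ} [NeZero n] (σC σD : ℕ) (h : (σC : ZMod n) ≠ (σD : ZMod n)) (g : ZMod n) :
    (∃ e₃, e₃ + 1 < n ∧ ((σC + e₃ : ℕ) : ZMod n) = g) ∨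
    (∃ e₃, e₃ + 1 < n ∧ ((σD + e₃ : ℕ) : ZMod n) = g) := by
  have hv1 : ((g - σC).val : ZMod n) = g - σC := natCast_val_self _
  have hv2 : ((g - σD).val : ZMod n) = g - σD := natCast_val_self _
  have hne : (g - σC).val ≠ (g - σD).val := by
    intro he
    apply h
    have : ((g - σC).val : ZMod n) = ((g - σD).val : ZMod n) := by rw [he]
    rw [hv1, hv2] at this
    linear_combination -this
  have l1 : (g - σC).val < n := ZMod.val_lt _
  have l2 : (g - σD).val < n := ZMod.val_lt _
  rcases Nat.lt_or_ge ((g - σC).val + 1) n with hlt | hge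
  · left; exact ⟨(g - σC).val, hlt, by push_cast [hv1]; ring⟩
  · right
    refine ⟨(g - σD).val, by omega, by push_cast [hv2]; ring⟩

lemma sum_indicator (A B lo e : ℕ) (h1 : A ≤ lo) (h2 : lo + e < B) (P : ℕ → Prop) [DecidablePred P]
    (hP : ∀ k, A < k → k < B → (P k ↔ (lo < k ∧ k ≤ lo + e))) :
    ∑ k ∈ Finset.Ioo A B, (if P k then (1:ℕ) else 0) = e := by
  rw [Finset.sum_boole]
  have : Finset.filter (fun x => P x) (Finset.Ioo A B) = Finset.Ioc lo (lo + e) := by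
    ext k
    simp only [Finset.mem_filter, Finset.mem_Ioo, Finset.mem_Ioc]
    constructor
    · rintro ⟨⟨ha, hb⟩, hp⟩; exact (hP k ha hb).mp hp
    · intro hk
      have ha : A < k := by omega
      have hb : k < B := by omega
      exact ⟨⟨ha, hb⟩, (hP k ha hb).mpr hk⟩
  rw [this, Nat.card_Ioc]
  simp

lemma digits_lemma (t : ℕ) (ht : 1 ≤ t) [NeZero (t^2+t+1)] (v : ZMod (t^2+t+1)) :
    (t+1) * (v.val / (t+1)) + v.val % (t+1) = v.val ∧ v.val % (t+1) ≤ t ∧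
    v.val / (t+1) ≤ t ∧ (v.val / (t+1) = t → v.val % (t+1) = 0) := by
  have h1 := Nat.div_add_mod v.val (t+1)
  have h2 : v.val % (t+1) < t+1 := Nat.mod_lt _ (by omega)
  have h3 : v.val < t^2+t+1 := ZMod.val_lt v
  have hexp : t^2+t = (t+1)*t := by ring
  have h4 : v.val / (t+1) ≤ t := by
    by_contra hcon
    push_neg at hcon
    have : (t+1)*(t+1) ≤ (t+1)*(v.val/(t+1)) := Nat.mul_le_mul_left _ hcon
    have h5 : (t+1)*(t+1) = (t+1)*t + (t+1) := by ring
    omega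
  refine ⟨h1, by omega, h4, ?_⟩
  intro hq
  rw [hq] at h1
  omega

lemma use_candidate (t n : ℕ) (ht : 1 ≤ t) (hn : t < n) (a : ℕ → ℕ)
    (c₁ : ZMod (t^2+t+1)) (c₂ : ZMod n)
    (s₁ s₂ e₁ e₂ e₃ : ℕ) (hs₁ : 1 ≤ s₁) (h12 : s₁ < s₂) (hs₂ : s₂ ≤ 2*t+n)
    (he₁ : e₁ + 1 ≤ s₁) (he₂ : s₁ + e₂ + 1 ≤ s₂) (he₃ : s₂ + e₃ ≤ 2*t+n)
    (E1 : (((t+1)*e₁ + e₂ : ℕ) : ZMod (t^2+t+1)) =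
        ((t : ZMod (t^2+t+1))+1) * c₁ - (t : ZMod (t^2+t+1)) * ((∑ i ∈ Finset.range s₁, a i : ℕ) : ZMod (t^2+t+1))
          - ((∑ i ∈ Finset.range s₂, a i : ℕ) : ZMod (t^2+t+1)))
    (E2 : ((e₁+e₂+e₃ : ℕ) : ZMod n) = c₂ - ((∑ i ∈ Finset.range (2*t+n+1), a i : ℕ) : ZMod n)) :
    ∃ s : ℕ → ℕ, ∃ ε : ℕ → ℕ,
      s 0 = 0 ∧ s (2 + 1) = (2*t+n) + 1 ∧ (∀ j, j ≤ 2 → s j < s (j + 1)) ∧ (∀ k, ε k ≤ 1) ∧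
      (fun v : Fin 3 → ℕ =>
        ((v 0 - t * v 1, v 0 + v 1 + v 2) : ZMod (t ^ 2 + t + 1) × ZMod n))
        (fun j : Fin 3 => (∑ i ∈ Finset.Ico (s j.1) (s (j.1 + 1)), a i) +
          (∑ k ∈ Finset.Ioo (s j.1) (s (j.1 + 1)), ε k)) = (c₁, c₂) := by
  classical
  refine ⟨fun i => if i = 0 then 0 else if i = 1 then s₁ else if i = 2 then s₂ else 2*t+n+1,
    fun k => if (0 < k ∧ k ≤ e₁) ∨ (s₁ < k ∧ k ≤ s₁+e₂) ∨ (s₂ < k ∧ k ≤ s₂+e₃) then 1 else 0,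
    rfl, rfl, ?_, ?_, ?_⟩
  · intro j hj
    interval_cases j <;> norm_num <;> omega
  · intro k
    dsimp only
    split <;> omega
  · have harg : (fun j : Fin 3 =>
        (∑ i ∈ Finset.Ico
          ((fun i => if i = 0 then 0 else if i = 1 then s₁ else if i = 2 then s₂ else 2*t+n+1) j.1)
          ((fun i => if i = 0 then 0 else if i = 1 then s₁ else if i = 2 then s₂ else 2*t+n+1) (j.1 + 1)), a i) +
        (∑ k ∈ Finset.Ioo
          ((fun i => if i = 0 then 0 else if i = 1 then s₁ else if i = 2 then s₂ else 2*t+n+1) j.1)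
          ((fun i => if i = 0 then 0 else if i = 1 then s₁ else if i = 2 then s₂ else 2*t+n+1) (j.1 + 1)),
          (fun k => if (0 < k ∧ k ≤ e₁) ∨ (s₁ < k ∧ k ≤ s₁+e₂) ∨ (s₂ < k ∧ k ≤ s₂+e₃) then 1 else 0) k))
      = ![ (∑ i ∈ Finset.range s₁, a i) + e₁, (∑ i ∈ Finset.Ico s₁ s₂, a i) + e₂,
           (∑ i ∈ Finset.Ico s₂ (2*t+n+1), a i) + e₃ ] := by
      funext j
      fin_cases j
      · show (∑ i ∈ Finset.Ico 0 s₁, a i) + (∑ k ∈ Finset.Ioo 0 s₁,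
          (fun k => if (0 < k ∧ k ≤ e₁) ∨ (s₁ < k ∧ k ≤ s₁+e₂) ∨ (s₂ < k ∧ k ≤ s₂+e₃) then 1 else 0) k) = _
        rw [← Finset.range_eq_Ico]
        simp only [Matrix.cons_val_zero]
        congr 1
        exact sum_indicator 0 s₁ 0 e₁ le_rfl (by omega) _ (fun k hk hk' => by omega)
      · show (∑ i ∈ Finset.Ico s₁ s₂, a i) + (∑ k ∈ Finset.Ioo s₁ s₂,
          (fun k => if (0 < k ∧ k ≤ e₁) ∨ (s₁ < k ∧ k ≤ s₁+e₂) ∨ (s₂ < k ∧ k ≤ s₂+e₃) then 1 else 0) k) = _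
        simp only [Matrix.cons_val_one, Matrix.head_cons]
        congr 1
        exact sum_indicator s₁ s₂ s₁ e₂ le_rfl (by omega) _ (fun k hk hk' => by omega)
      · show (∑ i ∈ Finset.Ico s₂ (2*t+n+1), a i) + (∑ k ∈ Finset.Ioo s₂ (2*t+n+1),
          (fun k => if (0 < k ∧ k ≤ e₁) ∨ (s₁ < k ∧ k ≤ s₁+e₂) ∨ (s₂ < k ∧ k ≤ s₂+e₃) then 1 else 0) k) = _
        simp only [Matrix.cons_val_two, Matrix.tail_cons, Matrix.head_cons]
        congr 1
        exact sum_indicator s₂ (2*t+n+1) s₂ e₃ le_rfl (by omega) _ (fun k hk hk' => by omega)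
    rw [harg]
    have hm : (t : ZMod (t^2+t+1))^2 + (t : ZMod (t^2+t+1)) + 1 = 0 := by
      have h := ZMod.natCast_self (t^2+t+1)
      push_cast at h
      linear_combination h
    have hQ : (∑ i ∈ Finset.range s₁, a i) + (∑ i ∈ Finset.Ico s₁ s₂, a i) = ∑ i ∈ Finset.range s₂, a i := by
      rw [Finset.range_eq_Ico, Finset.range_eq_Ico]
      exact Finset.sum_Ico_consecutive a (m := 0) (n := s₁) (k := s₂) (by omega) (by omega)
    have hR : (∑ i ∈ Finset.range s₂, a i) + (∑ i ∈ Finset.Ico s₂ (2*t+n+1), a i)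
        = ∑ i ∈ Finset.range (2*t+n+1), a i := by
      rw [Finset.range_eq_Ico, Finset.range_eq_Ico]
      exact Finset.sum_Ico_consecutive a (m := 0) (n := s₂) (k := 2*t+n+1) (by omega) (by omega)
    simp only [Matrix.cons_val_zero, Matrix.cons_val_one, Matrix.head_cons, Matrix.cons_val_two,
      Matrix.tail_cons]
    rw [Prod.mk.injEq]
    constructor
    · have hQc : ((∑ i ∈ Finset.range s₁, a i : ℕ) : ZMod (t^2+t+1))
          + ((∑ i ∈ Finset.Ico s₁ s₂, a i : ℕ) : ZMod (t^2+t+1))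
          = ((∑ i ∈ Finset.range s₂, a i : ℕ) : ZMod (t^2+t+1)) := by
        exact_mod_cast congrArg (Nat.cast : ℕ → ZMod (t^2+t+1)) hQ
      push_cast at E1 hQc ⊢
      linear_combination (-(t : ZMod (t^2+t+1))) * E1 + (-(t : ZMod (t^2+t+1))) * hQc
        + ((e₁ : ZMod (t^2+t+1)) - c₁ + (∑ x ∈ Finset.range s₁, (a x : ZMod (t^2+t+1)))) * hm
    · have hQc : ((∑ i ∈ Finset.range s₁, a i : ℕ) : ZMod n)
          + ((∑ i ∈ Finset.Ico s₁ s₂, a i : ℕ) : ZMod n)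
          + ((∑ i ∈ Finset.Ico s₂ (2*t+n+1), a i : ℕ) : ZMod n)
          = ((∑ i ∈ Finset.range (2*t+n+1), a i : ℕ) : ZMod n) := by
        exact_mod_cast congrArg (Nat.cast : ℕ → ZMod n) (by omega : (∑ i ∈ Finset.range s₁, a i) + (∑ i ∈ Finset.Ico s₁ s₂, a i) + (∑ i ∈ Finset.Ico s₂ (2*t+n+1), a i) = ∑ i ∈ Finset.range (2*t+n+1), a i)
      push_cast at E2 hQc ⊢
      linear_combination E2 + hQc

theorem statement5 (t n : ℕ) (ht : 1 ≤ t) (hn : t < n) :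
    Function.Surjective
      (fun v : Fin 3 → ℕ =>
        ((v 0 - t * v 1, v 0 + v 1 + v 2) : ZMod (t ^ 2 + t + 1) × ZMod n)) ∧
    PolyColoring 2 (2 * t + n)
      (fun v : Fin 3 → ℕ =>
        ((v 0 - t * v 1, v 0 + v 1 + v 2) : ZMod (t ^ 2 + t + 1) × ZMod n)) := by
  have hn2 : 2 ≤ n := by omega
  haveI : NeZero (t^2+t+1) := ⟨by positivity⟩
  haveI : NeZero n := ⟨by omega⟩
  constructor
  · rintro ⟨z₁, z₂⟩
    refine ⟨![z₁.val, 0, (z₂ - (z₁.val : ZMod n)).val], ?_⟩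
    simp only [Matrix.cons_val_zero, Matrix.cons_val_one, Matrix.head_cons, Matrix.cons_val_two,
      Matrix.tail_cons]
    rw [Prod.mk.injEq]
    constructor
    · push_cast [natCast_val_self]; ring
    · push_cast [natCast_val_self]; ring
  · unfold PolyColoring
    intro a c
    obtain ⟨c₁, c₂⟩ := c
    have hm : (t : ZMod (t^2+t+1))^2 + (t : ZMod (t^2+t+1)) + 1 = 0 := by
      have h := ZMod.natCast_self (t^2+t+1)
      push_cast at h
      linear_combination h
    set G : ZMod n := c₂ - ((∑ i ∈ Finset.range (2*t+n+1), a i : ℕ) : ZMod n) with hGdef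
    set X : ZMod (t^2+t+1) := ((t : ZMod (t^2+t+1))+1) * c₁
        - (t : ZMod (t^2+t+1)) * ((∑ i ∈ Finset.range t, a i : ℕ) : ZMod (t^2+t+1))
        - ((∑ i ∈ Finset.range (2*t+1), a i : ℕ) : ZMod (t^2+t+1)) with hXdef
    set Y : ZMod (t^2+t+1) := ((t : ZMod (t^2+t+1))+1) * c₁
        - (t : ZMod (t^2+t+1)) * ((∑ i ∈ Finset.range (t+1), a i : ℕ) : ZMod (t^2+t+1))
        - ((∑ i ∈ Finset.range (2*t+1), a i : ℕ) : ZMod (t^2+t+1)) with hYdef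
    set U : ZMod (t^2+t+1) := ((t : ZMod (t^2+t+1))+1) * c₁
        - (t : ZMod (t^2+t+1)) * ((∑ i ∈ Finset.range t, a i : ℕ) : ZMod (t^2+t+1))
        - ((∑ i ∈ Finset.range (2*t+2), a i : ℕ) : ZMod (t^2+t+1)) with hUdef
    set W : ZMod (t^2+t+1) := ((t : ZMod (t^2+t+1))+1) * c₁
        - (t : ZMod (t^2+t+1)) * ((∑ i ∈ Finset.range (t+1), a i : ℕ) : ZMod (t^2+t+1))
        - ((∑ i ∈ Finset.range (2*t+2), a i : ℕ) : ZMod (t^2+t+1)) with hWdef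
    by_cases hA : X.val = t^2 + t
    case neg =>
      -- candidate A : (s₁, s₂) = (t, 2t+1)
      obtain ⟨hsum, hmod, hdiv, hdm⟩ := digits_lemma t ht X
      have hexp : (t+1)*t = t^2+t := by ring
      have hXlt : X.val < t^2+t+1 := ZMod.val_lt X
      have hf₁ : X.val / (t+1) + 1 ≤ t := by
        rcases Nat.lt_or_ge (X.val / (t+1)) t with h | h
        · omega
        · have h' : X.val / (t+1) = t := by omega
          have h2 := hdm h'
          rw [h'] at hsum
          omega
      obtain ⟨e₃, he₃lt, hE2⟩ := exists_e3 (X.val / (t+1) + X.val % (t+1)) G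
      apply use_candidate t n ht hn a c₁ c₂ t (2*t+1) (X.val / (t+1)) (X.val % (t+1)) e₃
        (by omega) (by omega) (by omega) (by omega) (by omega) (by omega)
      · rw [hsum, ← hXdef]
        exact natCast_val_self X
      · rw [← hGdef]
        exact hE2
    case pos =>
    by_cases hB : Y.val % (t+1) = t
    case neg =>
      -- candidate B : (s₁, s₂) = (t+1, 2t+1)
      obtain ⟨hsum, hmod, hdiv, hdm⟩ := digits_lemma t ht Y
      obtain ⟨e₃, he₃lt, hE2⟩ := exists_e3 (Y.val / (t+1) + Y.val % (t+1)) G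
      apply use_candidate t n ht hn a c₁ c₂ (t+1) (2*t+1) (Y.val / (t+1)) (Y.val % (t+1)) e₃
        (by omega) (by omega) (by omega) (by omega) (by omega) (by omega)
      · rw [hsum, ← hYdef]
        exact natCast_val_self Y
      · rw [← hGdef]
        exact hE2
    case pos =>
      obtain ⟨k, hk, hYval⟩ : ∃ k, k + 1 ≤ t ∧ Y.val = (t+1)*k + t := by
        obtain ⟨hsY, hmY, hdY, hdmY⟩ := digits_lemma t ht Y
        refine ⟨Y.val / (t+1), ?_, by omega⟩
        rcases Nat.lt_or_ge (Y.val / (t+1)) t with h | h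
        · omega
        · have h' : Y.val / (t+1) = t := by omega
          have h2 := hdmY h'
          omega
      have hYc : (((t+1)*k + t : ℕ) : ZMod (t^2+t+1)) = Y := by
        rw [← hYval]; exact natCast_val_self Y
      have hXc : ((t^2+t : ℕ) : ZMod (t^2+t+1)) = X := by
        have h := natCast_val_self X
        rw [hA] at h
        exact h
      have hw : W = U + (((t+1)*(k+1) : ℕ) : ZMod (t^2+t+1)) := by
        push_cast at hYc hXc ⊢
        linear_combination hWdef - hUdef - hYdef + hXdef - hYc + hXc - hm
      obtain ⟨f₁, f₂, hmU, hdU, hdmU, hUc⟩ :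
          ∃ f₁ f₂, f₂ ≤ t ∧ f₁ ≤ t ∧ (f₁ = t → f₂ = 0) ∧
            U = (((t+1)*f₁ + f₂ : ℕ) : ZMod (t^2+t+1)) := by
        obtain ⟨h1, h2, h3, h4⟩ := digits_lemma t ht U
        exact ⟨_, _, h2, h3, h4, by rw [h1]; exact (natCast_val_self U).symm⟩
      obtain ⟨cE₁, cE₂, dE₁, dE₂, hc1, hc2, hd1, hd2, hCrep, hDrep, hneq⟩ :
          ∃ cE₁ cE₂ dE₁ dE₂ : ℕ, cE₁ + 1 ≤ t ∧ cE₂ ≤ t+1 ∧ dE₁ ≤ t ∧ dE₂ ≤ t ∧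
            (((t+1)*cE₁ + cE₂ : ℕ) : ZMod (t^2+t+1)) = U ∧
            (((t+1)*dE₁ + dE₂ : ℕ) : ZMod (t^2+t+1)) = W ∧
            ((cE₁+cE₂ : ℕ) : ZMod n) ≠ ((dE₁+dE₂ : ℕ) : ZMod n) := by
        by_cases h1 : f₁ + k + 1 ≤ t
        · refine ⟨f₁, f₂, f₁+k+1, f₂, by omega, by omega, by omega, by omega, hUc.symm, ?_, ?_⟩
          · rw [hw, hUc]
            push_cast
            ring
          · rw [(by omega : f₁+k+1+f₂ = f₁+f₂+(k+1))]
            exact cast_ne_shift (f₁+f₂) (k+1) (by omega) (by omega)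
        · push_neg at h1
          by_cases h2 : 1 ≤ f₂
          · have hf₁t : f₁ + 1 ≤ t := by
              rcases Nat.lt_or_ge f₁ t with h | h
              · omega
              · have := hdmU (by omega); omega
            refine ⟨f₁, f₂, f₁+k+1-t, f₂-1, by omega, by omega, by omega, by omega, hUc.symm, ?_, ?_⟩
            · rw [hw, hUc]
              push_cast [Nat.cast_sub (by omega : t ≤ f₁+k+1), Nat.cast_sub h2]
              linear_combination -hm
            · apply Ne.symm
              rw [(by omega : f₁+f₂ = (f₁+k+1-t)+(f₂-1)+(t-k))]
              exact cast_ne_shift ((f₁+k+1-t)+(f₂-1)) (t-k) (by omega) (by omega)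
          · have hf20 : f₂ = 0 := by omega
            subst hf20
            by_cases h3 : f₁ + 1 ≤ t
            · refine ⟨f₁, 0, f₁+k-t, t, by omega, by omega, by omega, by omega, hUc.symm, ?_, ?_⟩
              · rw [hw, hUc]
                push_cast [Nat.cast_sub (by omega : t ≤ f₁+k)]
                linear_combination -hm
              · rw [(by omega : f₁+k-t+t = f₁+0+k)]
                exact cast_ne_shift (f₁+0) k (by omega) (by omega)
            · have hf₁ : f₁ = t := by omega
              refine ⟨t-1, t+1, k, t, by omega, by omega, by omega, by omega, ?_, ?_, ?_⟩
              · rw [hUc, hf₁]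
                push_cast [Nat.cast_sub ht]
                ring
              · rw [hw, hUc, hf₁]
                push_cast
                linear_combination -hm
              · apply Ne.symm
                rw [(by omega : t-1+(t+1) = k+t+(t-k))]
                exact cast_ne_shift (k+t) (t-k) (by omega) (by omega)
      rcases exists_e3_pair (cE₁+cE₂) (dE₁+dE₂) hneq G with ⟨e₃, he₃, hE2⟩ | ⟨e₃, he₃, hE2⟩
      · apply use_candidate t n ht hn a c₁ c₂ t (2*t+2) cE₁ cE₂ e₃
          (by omega) (by omega) (by omega) (by omega) (by omega) (by omega)
        · rw [← hUdef]; exact hCrep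
        · rw [← hGdef]; exact hE2
      · apply use_candidate t n ht hn a c₁ c₂ (t+1) (2*t+2) dE₁ dE₂ e₃
          (by omega) (by omega) (by omega) (by omega) (by omega) (by omega)
        · rw [← hWdef]; exact hDrep
        · rw [← hGdef]; exact hE2
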